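/- (Theorem 1, implication 3)⇒1) for f ∈ L_{1,Y}) Let r ≥ 1 be an integer, and suppose that f̂(k) = 0 for every k ∈ ℤ^d that does not lie in Y = ℤ^d_+ ∪ ℤ^d_− (that is, unless either k_j ≥ 0 for all j, or k_j < 0 for all j). If D_{r−1}(h) := (∑_{|k|₁≥r−1} (|k|₁!/(|k|₁−r+1)!)^p |f̂(k)|^p · |1 − e^{i h σ(k)}|^p)^{1/p}, with σ(k) = k_1 + ⋯ + k_d, satisfies D_{r−1}(h) = O(ω(|h|)) as h → 0, then E_A(ρ) := (∑_{|k|₁≥r} (∑_{j=r}^{|k|₁} C(|k|₁,j)(1−ρ)^j ρ^{|k|₁−j})^p |f̂(k)|^p)^{1/p} satisfies E_A(ρ) = O((1−ρ)^{r−1}·ω(1−ρ)) as ρ→1⁻. -/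

import Mathlib

open scoped Real ENNReal
open MeasureTheory

def norm1 {d : ℕ} (k : Fin d → ℤ) : ℕ := ∑ j, (k j).natAbs

def diagSum {d : ℕ} (k : Fin d → ℤ) : ℤ := ∑ j, k j

noncomputable def fCoeff {d : ℕ} (f : (Fin d → ℝ) → ℂ) (k : Fin d → ℤ) : ℂ :=
  ∫ x in Set.Icc (0 : Fin d → ℝ) (fun _ => 2 * Real.pi),
    f x * Complex.exp (-Complex.I * (∑ j, (k j : ℂ) * (x j : ℂ)))

section Helpers

lemma abs_one_sub_exp (θ : ℝ) :
    ‖1 - Complex.exp (Complex.I * θ)‖ = 2 * |Real.sin (θ / 2)| := by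
  have h1 : Complex.exp (Complex.I * θ) = Complex.cos θ + Complex.sin θ * Complex.I := by
    rw [mul_comm, Complex.exp_mul_I]
  have h2 : (1 : ℂ) - (Complex.cos θ + Complex.sin θ * Complex.I)
      = Complex.ofReal (1 - Real.cos θ) + Complex.ofReal (-Real.sin θ) * Complex.I := by
    rw [← Complex.ofReal_cos, ← Complex.ofReal_sin]; push_cast; ring
  rw [h1, h2, Complex.norm_def, Complex.normSq_add_mul_I]
  have hc : Real.cos θ = 1 - 2 * Real.sin (θ / 2) ^ 2 := by
    have h3 : θ = 2 * (θ / 2) := by ring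
    rw [h3, Real.cos_two_mul, Real.cos_sq']; ring
  have : (1 - Real.cos θ) ^ 2 + (-Real.sin θ) ^ 2 = (2 * |Real.sin (θ / 2)|) ^ 2 := by
    have h4 := Real.sin_sq_add_cos_sq θ
    have h5 : |Real.sin (θ / 2)| ^ 2 = Real.sin (θ / 2) ^ 2 := sq_abs _
    nlinarith [h4, h5, hc]
  rw [this, Real.sqrt_sq (by positivity)]

lemma diag_sign {d : ℕ} (k : Fin d → ℤ) (h : (∀ j, 0 ≤ k j) ∨ (∀ j, k j < 0)) :
    diagSum k = (norm1 k : ℤ) ∨ diagSum k = -(norm1 k : ℤ) := by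
  cases h with
  | inl h =>
    left
    unfold diagSum norm1
    push_cast
    exact Finset.sum_congr rfl fun j _ => (abs_of_nonneg (h j)).symm
  | inr h =>
    right
    unfold diagSum norm1
    push_cast
    rw [← Finset.sum_neg_distrib]
    exact Finset.sum_congr rfl fun j _ => by rw [abs_of_neg (h j), neg_neg]

lemma abs_diag {d : ℕ} (k : Fin d → ℤ)
    (hk : diagSum k = (norm1 k : ℤ) ∨ diagSum k = -(norm1 k : ℤ)) (h : ℝ) :
    ‖1 - Complex.exp (Complex.I * (h:ℂ) * (diagSum k : ℂ))‖
      = 2 * |Real.sin (h * (norm1 k : ℝ) / 2)| := by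
  have e : Complex.I * (h:ℂ) * ((diagSum k : ℤ):ℂ)
      = Complex.I * ((h * ((diagSum k : ℤ):ℝ) : ℝ) : ℂ) := by push_cast; ring
  rw [e, abs_one_sub_exp]
  rcases hk with hk | hk <;> rw [hk] <;> push_cast
  · rfl
  · rw [show h * (-(norm1 k : ℝ)) / 2 = -(h * (norm1 k : ℝ) / 2) by ring, Real.sin_neg, abs_neg]

lemma binom_tail_le_one {ν r : ℕ} {x : ℝ} (hx0 : 0 ≤ x) (hx1 : x ≤ 1) :
    ∑ j ∈ Finset.Icc r ν, (ν.choose j : ℝ) * x ^ j * (1 - x) ^ (ν - j) ≤ 1 := by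
  have h1 : ∑ j ∈ Finset.Icc r ν, (ν.choose j : ℝ) * x ^ j * (1 - x) ^ (ν - j)
      ≤ ∑ j ∈ Finset.range (ν + 1), (ν.choose j : ℝ) * x ^ j * (1 - x) ^ (ν - j) := by
    apply Finset.sum_le_sum_of_subset_of_nonneg
    · intro j hj
      simp only [Finset.mem_Icc] at hj
      simp only [Finset.mem_range]; omega
    · intro j _ _
      have : (0:ℝ) ≤ 1 - x := by linarith
      positivity
  have h2 : ∑ j ∈ Finset.range (ν + 1), (ν.choose j : ℝ) * x ^ j * (1 - x) ^ (ν - j) = 1 := by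
    have hb := add_pow x (1 - x) ν
    simp only [show x + (1 - x) = 1 by ring, one_pow] at hb
    calc ∑ j ∈ Finset.range (ν + 1), (ν.choose j : ℝ) * x ^ j * (1 - x) ^ (ν - j)
        = ∑ j ∈ Finset.range (ν + 1), x ^ j * (1 - x) ^ (ν - j) * (ν.choose j : ℝ) :=
          Finset.sum_congr rfl fun j _ => by ring
      _ = 1 := hb.symm
  linarith

lemma binom_tail_le {ν r : ℕ} (hr : 1 ≤ r) {x : ℝ} (hx0 : 0 ≤ x) (hx1 : x ≤ 1) :
    ∑ j ∈ Finset.Icc r ν, (ν.choose j : ℝ) * x ^ j * (1 - x) ^ (ν - j)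
      ≤ (ν.choose r : ℝ) * x ^ r := by
  rcases le_or_gt r ν with hrν | hrν
  · have hx1' : (0:ℝ) ≤ 1 - x := by linarith
    have step1 : ∑ j ∈ Finset.Icc r ν, (ν.choose j : ℝ) * x ^ j * (1 - x) ^ (ν - j)
        ≤ ∑ j ∈ Finset.Icc r ν, (ν.choose r : ℝ) * ((ν - r).choose (j - r) : ℝ) * x ^ j * (1 - x) ^ (ν - j) := by
      apply Finset.sum_le_sum
      intro j hj
      simp only [Finset.mem_Icc] at hj
      have key : ν.choose j ≤ ν.choose r * (ν - r).choose (j - r) := by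
        have h := Nat.choose_mul (n := ν) hj.1
        have hpos : 1 ≤ j.choose r := Nat.choose_pos hj.1
        calc ν.choose j ≤ ν.choose j * j.choose r := Nat.le_mul_of_pos_right _ hpos
          _ = ν.choose r * (ν - r).choose (j - r) := h
      have hcast : (ν.choose j : ℝ) ≤ (ν.choose r : ℝ) * ((ν - r).choose (j - r) : ℝ) := by
        exact_mod_cast key
      have hnn : (0:ℝ) ≤ x ^ j * (1 - x) ^ (ν - j) := by positivity
      calc (ν.choose j : ℝ) * x ^ j * (1 - x) ^ (ν - j)
          = (ν.choose j : ℝ) * (x ^ j * (1 - x) ^ (ν - j)) := by ring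
        _ ≤ (ν.choose r : ℝ) * ((ν - r).choose (j - r) : ℝ) * (x ^ j * (1 - x) ^ (ν - j)) :=
            mul_le_mul_of_nonneg_right hcast hnn
        _ = (ν.choose r : ℝ) * ((ν - r).choose (j - r) : ℝ) * x ^ j * (1 - x) ^ (ν - j) := by ring
    have step2 : ∑ j ∈ Finset.Icc r ν, (ν.choose r : ℝ) * ((ν - r).choose (j - r) : ℝ) * x ^ j * (1 - x) ^ (ν - j)
        = (ν.choose r : ℝ) * x ^ r := by
      have reindex : ∑ j ∈ Finset.Icc r ν, (ν.choose r : ℝ) * ((ν - r).choose (j - r) : ℝ) * x ^ j * (1 - x) ^ (ν - j)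
          = ∑ i ∈ Finset.range (ν - r + 1), (ν.choose r : ℝ) * ((ν - r).choose i : ℝ) * x ^ (i + r) * (1 - x) ^ (ν - r - i) := by
        apply Finset.sum_nbij' (fun j => j - r) (fun i => i + r)
        · intro j hj; simp only [Finset.mem_Icc] at hj; simp only [Finset.mem_range]; omega
        · intro i hi; simp only [Finset.mem_range] at hi; simp only [Finset.mem_Icc]; omega
        · intro j hj; simp only [Finset.mem_Icc] at hj; omega
        · intro i hi; simp only [Finset.mem_range] at hi; omega
        · intro j hj
          simp only [Finset.mem_Icc] at hj
          have e1 : j - r + r = j := by omega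
          have e2 : ν - r - (j - r) = ν - j := by omega
          rw [e1, e2]
      rw [reindex]
      have expand : ∑ i ∈ Finset.range (ν - r + 1), (ν.choose r : ℝ) * ((ν - r).choose i : ℝ) * x ^ (i + r) * (1 - x) ^ (ν - r - i)
          = (ν.choose r : ℝ) * x ^ r * ∑ i ∈ Finset.range (ν - r + 1), x ^ i * (1 - x) ^ (ν - r - i) * ((ν - r).choose i : ℝ) := by
        rw [Finset.mul_sum]
        apply Finset.sum_congr rfl
        intro i _
        rw [pow_add]; ring
      rw [expand]
      have hb := add_pow x (1 - x) (ν - r)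
      simp only [show x + (1 - x) = 1 by ring, one_pow] at hb
      rw [← hb]; ring
    calc _ ≤ _ := step1
      _ = _ := step2
  · have : Finset.Icc r ν = ∅ := Finset.Icc_eq_empty (by omega)
    rw [this, Finset.sum_empty]
    positivity

lemma nu_pow_le_descFactorial {ν r : ℕ} (hr : 1 ≤ r) (hrν : r ≤ ν) :
    (ν:ℝ) ^ (r - 1) ≤ (r:ℝ) ^ (r - 1) * (Nat.descFactorial ν (r - 1) : ℝ) := by
  have key : ν ^ (r - 1) ≤ r ^ (r - 1) * Nat.descFactorial ν (r - 1) := by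
    have h1 : (ν + 1 - (r - 1)) ^ (r - 1) ≤ Nat.descFactorial ν (r - 1) :=
      Nat.pow_sub_le_descFactorial ν (r - 1)
    have h2 : ν ≤ r * (ν + 1 - (r - 1)) := by
      obtain ⟨a, rfl⟩ := Nat.exists_eq_add_of_le hrν
      have e : r + a + 1 - (r - 1) = a + 2 := by omega
      rw [e]
      have : a ≤ r * a := Nat.le_mul_of_pos_left a hr
      calc r + a ≤ r + r * a + r := by omega
        _ = r * (a + 2) := by ring
    calc ν ^ (r - 1) ≤ (r * (ν + 1 - (r - 1))) ^ (r - 1) := Nat.pow_le_pow_left h2 _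
      _ = r ^ (r - 1) * (ν + 1 - (r - 1)) ^ (r - 1) := mul_pow _ _ _
      _ ≤ r ^ (r - 1) * Nat.descFactorial ν (r - 1) := Nat.mul_le_mul_left _ h1
  exact_mod_cast key

lemma choose_fac_le {ν r : ℕ} (hr : 1 ≤ r) :
    (ν.choose r : ℝ) * (r.factorial : ℝ) ≤ (ν : ℝ) * (Nat.descFactorial ν (r - 1) : ℝ) := by
  have key : ν.choose r * r.factorial ≤ ν * Nat.descFactorial ν (r - 1) := by
    have h1 : ν.choose r * r.factorial = Nat.descFactorial ν r := by
      rw [Nat.descFactorial_eq_factorial_mul_choose]; ring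
    have h2 : Nat.descFactorial ν r = (ν - (r - 1)) * Nat.descFactorial ν (r - 1) := by
      have e : r = (r - 1) + 1 := by omega
      rw [e, Nat.descFactorial_succ]; simp
    rw [h1, h2]
    exact Nat.mul_le_mul_right _ (Nat.sub_le _ _)
  exact_mod_cast key

end Helpers

set_option maxHeartbeats 2000000 in
theorem stmt_7
    {d : ℕ} (hd : 1 ≤ d) {p : ℝ} (hp : 1 ≤ p)
    (f : (Fin d → ℝ) → ℂ)
    (hper : ∀ (x : Fin d → ℝ) (j : Fin d), f (Function.update x j (x j + 2 * Real.pi)) = f x)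
    (hint : IntegrableOn f (Set.Icc (0 : Fin d → ℝ) (fun _ => 2 * Real.pi)))
    (ω : ℝ → ℝ)
    (hωc : ContinuousOn ω (Set.Icc 0 1)) (hωm : MonotoneOn ω (Set.Icc 0 1))
    (hω0 : ω 0 = 0) (hωpos : ∀ t ∈ Set.Ioc (0:ℝ) 1, 0 < ω t)
    (hB : ∃ C₀ > (0:ℝ), ∃ N₀ : ℕ, 1 ≤ N₀ ∧ ∀ n : ℕ, N₀ ≤ n →
      (∑' v : ℕ, ENNReal.ofReal (ω (1 / ((n : ℝ) + 1 + (v : ℝ))) / ((n : ℝ) + 1 + (v : ℝ))))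
        ≤ ENNReal.ofReal (C₀ * ω (1 / (n : ℝ))))
    (r : ℕ) (hr : 1 ≤ r)
    (hY : ∀ k : Fin d → ℤ, ¬ ((∀ j, 0 ≤ k j) ∨ (∀ j, k j < 0)) → fCoeff f k = 0)
    (hD :
      ∃ C > (0:ℝ), ∃ δ > (0:ℝ), ∀ h : ℝ, 0 < |h| → |h| < δ →
      (∑' k : Fin d → ℤ, if r - 1 ≤ norm1 k then
          ENNReal.ofReal (((Nat.descFactorial (norm1 k) (r - 1) : ℝ) * ‖fCoeff f k‖ * ‖1 - Complex.exp (Complex.I * (h : ℂ) * (diagSum k : ℂ))‖) ^ p)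
          else 0) ^ (1/p)
        ≤ ENNReal.ofReal (C * ω |h|))
    :
    ∃ C > (0:ℝ), ∃ δ : ℝ, 0 < δ ∧ δ < 1 ∧ ∀ ρ : ℝ, 1 - δ < ρ → ρ < 1 →
      (∑' k : Fin d → ℤ, if r ≤ norm1 k then
          ENNReal.ofReal (((∑ j ∈ Finset.Icc r (norm1 k),
            (Nat.choose (norm1 k) j : ℝ) * (1 - ρ) ^ j * ρ ^ (norm1 k - j)) * ‖fCoeff f k‖) ^ p)
          else 0) ^ (1/p)
        ≤ ENNReal.ofReal (C * (1 - ρ) ^ (r - 1) * ω (1 - ρ)) := by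
  obtain ⟨C₀, hC₀, N₀, hN₀1, hBC⟩ := hB
  obtain ⟨C, hC, δ, hδ, hDC⟩ := hD
  have hp0 : (0:ℝ) < p := lt_of_lt_of_le one_pos hp
  have hp0' : p ≠ 0 := ne_of_gt hp0
  have hπ3 := Real.pi_gt_three
  have hπ0 : (0:ℝ) < π := Real.pi_pos
  have hsin14 : 0 < Real.sin (1/4) :=
    Real.sin_pos_of_pos_of_lt_pi (by norm_num) (by linarith)
  set cp : ℝ := (2 * Real.sin (1/4)) ^ p / 2 with hcp_def
  have hcp : 0 < cp := by
    have h2s : (0:ℝ) < 2 * Real.sin (1/4) := by linarith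
    have := Real.rpow_pos_of_pos h2s p
    positivity
  set E : ℝ := (C₀ / cp) ^ (1/p) with hE_def
  have hE0 : 0 ≤ E := Real.rpow_nonneg (by positivity) _
  have hEp : E ^ p = C₀ / cp := by
    rw [hE_def, ← Real.rpow_mul (by positivity), one_div, inv_mul_cancel₀ hp0', Real.rpow_one]
  clear_value cp E
  have hωnn : ∀ t : ℝ, 0 ≤ t → t ≤ 1 → 0 ≤ ω t := by
    intro t h0 h1
    have := hωm (Set.mem_Icc.mpr ⟨le_refl 0, zero_le_one⟩) (Set.mem_Icc.mpr ⟨h0, h1⟩) h0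
    linarith [hω0 ▸ this]
  have hωmono : ∀ a b : ℝ, 0 ≤ a → a ≤ b → b ≤ 1 → ω a ≤ ω b := by
    intro a b h0 hab hb1
    exact hωm (Set.mem_Icc.mpr ⟨h0, hab.trans hb1⟩) (Set.mem_Icc.mpr ⟨h0.trans hab, hb1⟩) hab
  have hfacpos : (0:ℝ) < (r.factorial : ℝ) := by
    exact_mod_cast Nat.factorial_pos r
  have hNr2 : (1:ℝ) ≤ (N₀:ℝ) := by exact_mod_cast hN₀1
  refine ⟨C * (π / (2 * (r.factorial : ℝ)) + (r:ℝ) ^ (r - 1) * E), ?_,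
    min δ (1 / ((N₀:ℝ) + r + 2)), ?_, ?_, ?_⟩
  · have h1 : (0:ℝ) < π / (2 * (r.factorial : ℝ)) := by positivity
    have h2 : (0:ℝ) ≤ (r:ℝ) ^ (r - 1) * E := by positivity
    have := mul_pos hC (by linarith : (0:ℝ) < π / (2 * (r.factorial : ℝ)) + (r:ℝ) ^ (r - 1) * E)
    exact this
  · exact lt_min hδ (by positivity)
  · apply lt_of_le_of_lt (min_le_right _ _)
    rw [div_lt_one (by linarith)]
    linarith
  intro ρ hρ1 hρ2
  set x := 1 - ρ with hx_def
  have hx0 : (0:ℝ) < x := by rw [hx_def]; linarith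
  have hxδ' : x < min δ (1 / ((N₀:ℝ) + r + 2)) := by rw [hx_def]; linarith
  have hxδ : x < δ := lt_of_lt_of_le hxδ' (min_le_left _ _)
  have hxN : x < 1 / ((N₀:ℝ) + r + 2) := lt_of_lt_of_le hxδ' (min_le_right _ _)
  have hx1 : x < 1 := by
    apply lt_of_lt_of_le hxN
    rw [div_le_one (by linarith)]
    linarith
  have hρ0 : (0:ℝ) < ρ := by
    have : x < 1 := hx1
    rw [hx_def] at this; linarith
  have hρ1' : ρ ≤ 1 := le_of_lt hρ2
  have hρeq : ρ = 1 - x := by rw [hx_def]; ring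
  clear_value x
  set n : ℕ := ⌈1/x⌉₊ with hn_def
  have hn1 : 1/x ≤ (n:ℝ) := Nat.le_ceil _
  have hn2 : (n:ℝ) < 1/x + 1 := Nat.ceil_lt_add_one (by positivity)
  clear_value n
  have hinvx : (N₀:ℝ) + r + 2 < 1/x := by
    rw [lt_div_iff₀ hx0]
    calc ((N₀:ℝ) + r + 2) * x < ((N₀:ℝ) + r + 2) * (1 / ((N₀:ℝ) + r + 2)) :=
      mul_lt_mul_of_pos_left hxN (by positivity)
      _ = 1 := by field_simp
  have hnN : N₀ + r + 2 ≤ n := by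
    have h1 : ((N₀ + r + 2 : ℕ):ℝ) ≤ (n:ℝ) := by push_cast; linarith
    exact_mod_cast h1
  have hrn : r ≤ n := by omega
  have hNn : N₀ ≤ n := by omega
  have hn1' : 1 ≤ n := by omega
  have hnpos : (0:ℝ) < (n:ℝ) := by
    have : (1:ℝ) ≤ (n:ℝ) := by exact_mod_cast hn1'
    linarith
  have hnx1 : 1 ≤ (n:ℝ) * x := by
    rw [div_le_iff₀ hx0] at hn1; linarith
  have hxn : 1/(n:ℝ) ≤ x := by
    rw [div_le_iff₀ hnpos]; linarith
  have hn1le : 1/(n:ℝ) ≤ 1 := by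
    rw [div_le_one hnpos]
    exact_mod_cast hn1'
  have hnx2 : (n:ℝ) * x ≤ 2 := by
    have h3 : (n:ℝ) * x < (1/x + 1) * x := mul_lt_mul_of_pos_right hn2 hx0
    have h4 : (1/x + 1) * x = 1 + x := by field_simp
    rw [h4] at h3; linarith
  have hωx : 0 < ω x := hωpos x ⟨hx0, hx1.le⟩
  -- the Dsum bound, in pth-power form
  have hDsum : ∀ h : ℝ, 0 < h → h < δ → h ≤ 1 →
      (∑' k : Fin d → ℤ, if r - 1 ≤ norm1 k then
          ENNReal.ofReal (((Nat.descFactorial (norm1 k) (r - 1) : ℝ) * ‖fCoeff f k‖ * ‖1 - Complex.exp (Complex.I * (h : ℂ) * (diagSum k : ℂ))‖) ^ p)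
          else 0)
        ≤ ENNReal.ofReal ((C * ω h) ^ p) := by
    intro h h0 hhδ hh1
    have h1 := hDC h (by rw [abs_of_pos h0]; exact h0) (by rwa [abs_of_pos h0])
    rw [abs_of_pos h0] at h1
    have h2 := ENNReal.rpow_le_rpow h1 hp0.le
    rwa [← ENNReal.rpow_mul, one_div, inv_mul_cancel₀ hp0', ENNReal.rpow_one,
      ENNReal.ofReal_rpow_of_nonneg (mul_nonneg hC.le (hωnn h h0.le hh1)) hp0.le] at h2
  -- pointwise bound for small frequencies
  have hsmall_pt : ∀ k : Fin d → ℤ,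
      (if r ≤ norm1 k ∧ norm1 k ≤ n then
        ENNReal.ofReal (((∑ j ∈ Finset.Icc r (norm1 k),
          (Nat.choose (norm1 k) j : ℝ) * x ^ j * ρ ^ (norm1 k - j)) * ‖fCoeff f k‖) ^ p)
        else 0)
      ≤ ENNReal.ofReal ((x ^ (r-1) * (π / (2 * (r.factorial:ℝ)))) ^ p) *
        (if r - 1 ≤ norm1 k then
          ENNReal.ofReal (((Nat.descFactorial (norm1 k) (r - 1) : ℝ) * ‖fCoeff f k‖ * ‖1 - Complex.exp (Complex.I * (x : ℂ) * (diagSum k : ℂ))‖) ^ p)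
          else 0) := by
    intro k
    by_cases hk : r ≤ norm1 k ∧ norm1 k ≤ n
    · rw [if_pos hk, if_pos (by omega : r - 1 ≤ norm1 k),
        ← ENNReal.ofReal_mul (by positivity)]
      apply ENNReal.ofReal_le_ofReal
      rw [← Real.mul_rpow (by positivity) (by positivity)]
      have hMnn : (0:ℝ) ≤ (∑ j ∈ Finset.Icc r (norm1 k),
          (Nat.choose (norm1 k) j : ℝ) * x ^ j * ρ ^ (norm1 k - j)) * ‖fCoeff f k‖ :=
        mul_nonneg (Finset.sum_nonneg fun j _ => by positivity) (norm_nonneg _)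
      apply Real.rpow_le_rpow hMnn ?base hp0.le
      case base =>
      by_cases hf : fCoeff f k = 0
      · simp only [hf, norm_zero, mul_zero, zero_mul]
        positivity
      · have hZ : ‖1 - Complex.exp (Complex.I * (x:ℂ) * (diagSum k : ℂ))‖
            = 2 * |Real.sin (x * (norm1 k : ℝ) / 2)| :=
          abs_diag k (diag_sign k (by by_contra h'; exact hf (hY k h'))) x
        have hνn : ((norm1 k : ℝ)) ≤ (n:ℝ) := Nat.cast_le.mpr hk.2
        have hνnn : (0:ℝ) ≤ (norm1 k : ℝ) := Nat.cast_nonneg _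
        have hνx2 : x * (norm1 k:ℝ) ≤ 2 := by
          have h5 : x * (norm1 k:ℝ) ≤ x * (n:ℝ) := mul_le_mul_of_nonneg_left hνn hx0.le
          have h6 : x * (n:ℝ) = (n:ℝ) * x := mul_comm _ _
          linarith
        have hsin_nn : 0 ≤ Real.sin (x * (norm1 k:ℝ) / 2) :=
          Real.sin_nonneg_of_nonneg_of_le_pi (by positivity) (by linarith only [hνx2, hπ3])
        have habs_sin : |Real.sin (x * (norm1 k:ℝ) / 2)| = Real.sin (x * (norm1 k:ℝ) / 2) :=
          abs_of_nonneg hsin_nn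
        have hsin_ge : x * (norm1 k:ℝ) ≤ π * Real.sin (x * (norm1 k:ℝ) / 2) := by
          have hms := Real.mul_le_sin (x := x * (norm1 k:ℝ) / 2) (by positivity)
            (by linarith only [hνx2, hπ3])
          have he : 2/π * (x * (norm1 k:ℝ) / 2) = x * (norm1 k:ℝ) / π := by ring
          rw [he, div_le_iff₀ hπ0] at hms
          linarith
        have hM1 : (∑ j ∈ Finset.Icc r (norm1 k), ((norm1 k).choose j : ℝ) * x ^ j * ρ ^ (norm1 k - j))
            ≤ ((norm1 k).choose r : ℝ) * x ^ r := by
          have hb := binom_tail_le (ν := norm1 k) (r := r) hr hx0.le hx1.le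
          rw [hρeq]
          exact hb
        have hM2 := choose_fac_le (ν := norm1 k) hr
        have hF : (0:ℝ) ≤ ‖fCoeff f k‖ := norm_nonneg _
        have hA : (0:ℝ) ≤ (Nat.descFactorial (norm1 k) (r-1) : ℝ) := Nat.cast_nonneg _
        have hxr : x ^ r = x ^ (r-1) * x := by
          rw [← pow_succ]; congr 1; omega
        rw [hZ, habs_sin]
        calc (∑ j ∈ Finset.Icc r (norm1 k), ((norm1 k).choose j : ℝ) * x ^ j * ρ ^ (norm1 k - j)) * ‖fCoeff f k‖
            ≤ (((norm1 k).choose r : ℝ) * x ^ r) * ‖fCoeff f k‖ :=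
              mul_le_mul_of_nonneg_right hM1 hF
          _ = (((norm1 k).choose r : ℝ) * (r.factorial:ℝ)) * (x^(r-1) * x * ‖fCoeff f k‖) / (r.factorial:ℝ) := by
              rw [hxr]; field_simp
          _ ≤ (((norm1 k):ℝ) * (Nat.descFactorial (norm1 k) (r-1) : ℝ)) * (x^(r-1) * x * ‖fCoeff f k‖) / (r.factorial:ℝ) := by
              apply div_le_div_of_nonneg_right ?_ hfacpos.le
              exact mul_le_mul_of_nonneg_right hM2 (by positivity)
          _ = (Nat.descFactorial (norm1 k) (r-1) : ℝ) * x^(r-1) * ‖fCoeff f k‖ * (x * ((norm1 k):ℝ)) / (r.factorial:ℝ) := by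
              ring
          _ ≤ (Nat.descFactorial (norm1 k) (r-1) : ℝ) * x^(r-1) * ‖fCoeff f k‖ * (π * Real.sin (x * (norm1 k:ℝ) / 2)) / (r.factorial:ℝ) := by
              apply div_le_div_of_nonneg_right ?_ hfacpos.le
              exact mul_le_mul_of_nonneg_left hsin_ge (by positivity)
          _ = x ^ (r-1) * (π / (2 * (r.factorial:ℝ))) *
              ((Nat.descFactorial (norm1 k) (r - 1) : ℝ) * ‖fCoeff f k‖ * (2 * Real.sin (x * (norm1 k:ℝ) / 2))) := by
              ring
    · rw [if_neg hk]
      exact bot_le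
  -- small-part sum bound
  have hsmall : (∑' k : Fin d → ℤ, if r ≤ norm1 k ∧ norm1 k ≤ n then
        ENNReal.ofReal (((∑ j ∈ Finset.Icc r (norm1 k),
          (Nat.choose (norm1 k) j : ℝ) * x ^ j * ρ ^ (norm1 k - j)) * ‖fCoeff f k‖) ^ p)
        else 0)
      ≤ ENNReal.ofReal ((x ^ (r-1) * (π / (2 * (r.factorial:ℝ)))) ^ p) *
        ENNReal.ofReal ((C * ω x) ^ p) := by
    calc _ ≤ ∑' k : Fin d → ℤ, ENNReal.ofReal ((x ^ (r-1) * (π / (2 * (r.factorial:ℝ)))) ^ p) *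
        (if r - 1 ≤ norm1 k then
          ENNReal.ofReal (((Nat.descFactorial (norm1 k) (r - 1) : ℝ) * ‖fCoeff f k‖ * ‖1 - Complex.exp (Complex.I * (x : ℂ) * (diagSum k : ℂ))‖) ^ p)
          else 0) := ENNReal.tsum_le_tsum hsmall_pt
      _ = ENNReal.ofReal ((x ^ (r-1) * (π / (2 * (r.factorial:ℝ)))) ^ p) *
          ∑' k : Fin d → ℤ, (if r - 1 ≤ norm1 k then
          ENNReal.ofReal (((Nat.descFactorial (norm1 k) (r - 1) : ℝ) * ‖fCoeff f k‖ * ‖1 - Complex.exp (Complex.I * (x : ℂ) * (diagSum k : ℂ))‖) ^ p)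
          else 0) := ENNReal.tsum_mul_left
      _ ≤ _ := mul_le_mul_right (hDsum x hx0 hxδ hx1.le) _
  -- pointwise bound for large frequencies
  have hlarge_pt : ∀ k : Fin d → ℤ,
      (if n < norm1 k then
        ENNReal.ofReal (((∑ j ∈ Finset.Icc r (norm1 k),
          (Nat.choose (norm1 k) j : ℝ) * x ^ j * ρ ^ (norm1 k - j)) * ‖fCoeff f k‖) ^ p)
        else 0)
      ≤ ENNReal.ofReal ((x ^ (r-1) * (r:ℝ) ^ (r-1)) ^ p) *
        (if n < norm1 k then
          ENNReal.ofReal (((Nat.descFactorial (norm1 k) (r - 1) : ℝ) * ‖fCoeff f k‖) ^ p)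
          else 0) := by
    intro k
    by_cases hk : n < norm1 k
    · rw [if_pos hk, if_pos hk, ← ENNReal.ofReal_mul (by positivity)]
      apply ENNReal.ofReal_le_ofReal
      rw [← Real.mul_rpow (by positivity) (by positivity)]
      have hMnn : (0:ℝ) ≤ (∑ j ∈ Finset.Icc r (norm1 k),
          (Nat.choose (norm1 k) j : ℝ) * x ^ j * ρ ^ (norm1 k - j)) * ‖fCoeff f k‖ :=
        mul_nonneg (Finset.sum_nonneg fun j _ => by positivity) (norm_nonneg _)
      apply Real.rpow_le_rpow hMnn ?base2 hp0.le
      case base2 =>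
      have hrν : r ≤ norm1 k := by omega
      have hM1 : (∑ j ∈ Finset.Icc r (norm1 k), ((norm1 k).choose j : ℝ) * x ^ j * ρ ^ (norm1 k - j)) ≤ 1 := by
        have hb := binom_tail_le_one (ν := norm1 k) (r := r) hx0.le hx1.le
        rw [hρeq]
        exact hb
      have hνx1 : 1 ≤ (norm1 k : ℝ) * x := by
        have h5 : (n:ℝ) ≤ (norm1 k : ℝ) := Nat.cast_le.mpr hk.le
        have h6 : (n:ℝ) * x ≤ (norm1 k:ℝ) * x := mul_le_mul_of_nonneg_right h5 hx0.le
        linarith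
      have hone : (1:ℝ) ≤ x ^ (r-1) * (r:ℝ) ^ (r-1) * (Nat.descFactorial (norm1 k) (r - 1) : ℝ) := by
        have h7 : (1:ℝ) ≤ ((norm1 k : ℝ) * x) ^ (r-1) := by
          calc (1:ℝ) = 1 ^ (r-1) := (one_pow _).symm
            _ ≤ ((norm1 k : ℝ) * x) ^ (r-1) := pow_le_pow_left₀ (by norm_num) hνx1 _
        have h8 : ((norm1 k : ℝ) * x) ^ (r-1) = (norm1 k:ℝ)^(r-1) * x^(r-1) := mul_pow _ _ _
        have h9 := nu_pow_le_descFactorial hr hrν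
        have h10 : (norm1 k:ℝ)^(r-1) * x^(r-1)
            ≤ ((r:ℝ)^(r-1) * (Nat.descFactorial (norm1 k) (r - 1) : ℝ)) * x^(r-1) :=
          mul_le_mul_of_nonneg_right h9 (by positivity)
        calc (1:ℝ) ≤ ((norm1 k : ℝ) * x) ^ (r-1) := h7
          _ = (norm1 k:ℝ)^(r-1) * x^(r-1) := h8
          _ ≤ ((r:ℝ)^(r-1) * (Nat.descFactorial (norm1 k) (r - 1) : ℝ)) * x^(r-1) := h10
          _ = x ^ (r-1) * (r:ℝ) ^ (r-1) * (Nat.descFactorial (norm1 k) (r - 1) : ℝ) := by ring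
      have hF : (0:ℝ) ≤ ‖fCoeff f k‖ := norm_nonneg _
      calc (∑ j ∈ Finset.Icc r (norm1 k), ((norm1 k).choose j : ℝ) * x ^ j * ρ ^ (norm1 k - j)) * ‖fCoeff f k‖
          ≤ 1 * ‖fCoeff f k‖ := mul_le_mul_of_nonneg_right hM1 hF
        _ = ‖fCoeff f k‖ := one_mul _
        _ ≤ (x ^ (r-1) * (r:ℝ) ^ (r-1) * (Nat.descFactorial (norm1 k) (r - 1) : ℝ)) * ‖fCoeff f k‖ := by
            nlinarith [hone, hF]
        _ = x ^ (r-1) * (r:ℝ) ^ (r-1) * ((Nat.descFactorial (norm1 k) (r - 1) : ℝ) * ‖fCoeff f k‖) := by ring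
    · rw [if_neg hk, if_neg hk, mul_zero]
  -- tail sum bound via condition (B)
  have htail : (∑' k : Fin d → ℤ, if n < norm1 k then
        ENNReal.ofReal (((Nat.descFactorial (norm1 k) (r - 1) : ℝ) * ‖fCoeff f k‖) ^ p)
        else 0)
      ≤ ENNReal.ofReal (C ^ p * (ω x) ^ (p-1) * (C₀ * ω x) / cp) := by
    have hωxp1 : (0:ℝ) ≤ (ω x) ^ (p-1) := Real.rpow_nonneg hωx.le _
    have hCp : (0:ℝ) ≤ C ^ p := Real.rpow_nonneg hC.le _
    have hlow : ENNReal.ofReal cp * (∑' k : Fin d → ℤ, if n < norm1 k then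
          ENNReal.ofReal (((Nat.descFactorial (norm1 k) (r - 1) : ℝ) * ‖fCoeff f k‖) ^ p) else 0)
        ≤ ∑' v : ℕ, ENNReal.ofReal (1 / ((n:ℝ) + 1 + (v:ℝ))) *
            (∑' k : Fin d → ℤ, if r - 1 ≤ norm1 k then
              ENNReal.ofReal (((Nat.descFactorial (norm1 k) (r - 1) : ℝ) * ‖fCoeff f k‖ *
                ‖1 - Complex.exp (Complex.I * ((1 / ((n:ℝ) + 1 + (v:ℝ)) : ℝ) : ℂ) * (diagSum k : ℂ))‖) ^ p)
              else 0) := by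
      rw [← ENNReal.tsum_mul_left]
      have hWrw : (∑' v : ℕ, ENNReal.ofReal (1 / ((n:ℝ) + 1 + (v:ℝ))) *
            (∑' k : Fin d → ℤ, if r - 1 ≤ norm1 k then
              ENNReal.ofReal (((Nat.descFactorial (norm1 k) (r - 1) : ℝ) * ‖fCoeff f k‖ *
                ‖1 - Complex.exp (Complex.I * ((1 / ((n:ℝ) + 1 + (v:ℝ)) : ℝ) : ℂ) * (diagSum k : ℂ))‖) ^ p)
              else 0))
          = ∑' k : Fin d → ℤ, ∑' v : ℕ, ENNReal.ofReal (1 / ((n:ℝ) + 1 + (v:ℝ))) *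
              (if r - 1 ≤ norm1 k then
              ENNReal.ofReal (((Nat.descFactorial (norm1 k) (r - 1) : ℝ) * ‖fCoeff f k‖ *
                ‖1 - Complex.exp (Complex.I * ((1 / ((n:ℝ) + 1 + (v:ℝ)) : ℝ) : ℂ) * (diagSum k : ℂ))‖) ^ p)
              else 0) := by
        rw [← ENNReal.tsum_comm]
        exact tsum_congr fun v => ENNReal.tsum_mul_left.symm
      rw [hWrw]
      apply ENNReal.tsum_le_tsum
      intro k
      by_cases hk : n < norm1 k
      · rw [if_pos hk]
        by_cases hf : fCoeff f k = 0
        · simp [hf, Real.zero_rpow hp0']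
        · have hsgn := diag_sign k (by by_contra h'; exact hf (hY k h'))
          have hrν : r - 1 ≤ norm1 k := by omega
          have hν1 : 1 ≤ norm1 k := by omega
          have hν0 : (0:ℝ) < (norm1 k : ℝ) := by exact_mod_cast hν1
          have hcard : (Finset.Icc (norm1 k - n) (2 * norm1 k - n - 1)).card = norm1 k := by
            rw [Nat.card_Icc]; omega
          have hstep : ∀ v ∈ Finset.Icc (norm1 k - n) (2 * norm1 k - n - 1),
              ENNReal.ofReal (1/(2*(norm1 k:ℝ))) *
                (ENNReal.ofReal (((Nat.descFactorial (norm1 k) (r - 1) : ℝ) * ‖fCoeff f k‖) ^ p) *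
                 ENNReal.ofReal ((2 * Real.sin (1/4)) ^ p))
              ≤ ENNReal.ofReal (1 / ((n:ℝ) + 1 + (v:ℝ))) *
                (if r - 1 ≤ norm1 k then
                ENNReal.ofReal (((Nat.descFactorial (norm1 k) (r - 1) : ℝ) * ‖fCoeff f k‖ *
                  ‖1 - Complex.exp (Complex.I * ((1 / ((n:ℝ) + 1 + (v:ℝ)) : ℝ) : ℂ) * (diagSum k : ℂ))‖) ^ p)
                else 0) := by
            intro v hv
            rw [if_pos hrν]
            simp only [Finset.mem_Icc] at hv
            have hμ1 : (norm1 k : ℝ) + 1 ≤ (n:ℝ) + 1 + (v:ℝ) := by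
              have h5 : norm1 k + 1 ≤ n + 1 + v := by omega
              exact_mod_cast h5
            have hμ2 : (n:ℝ) + 1 + (v:ℝ) ≤ 2 * (norm1 k:ℝ) := by
              have h5 : n + 1 + v ≤ 2 * norm1 k := by omega
              exact_mod_cast h5
            have hμpos : (0:ℝ) < (n:ℝ) + 1 + (v:ℝ) := by positivity
            have hZ := abs_diag k hsgn (1 / ((n:ℝ) + 1 + (v:ℝ)))
            have hθeq : (1 / ((n:ℝ) + 1 + (v:ℝ))) * (norm1 k:ℝ) / 2
                = (norm1 k:ℝ) / (2*((n:ℝ) + 1 + (v:ℝ))) := by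
              have hμne : (n:ℝ) + 1 + (v:ℝ) ≠ 0 := ne_of_gt hμpos
              field_simp
            have hθ1 : (1:ℝ)/4 ≤ (1 / ((n:ℝ) + 1 + (v:ℝ))) * (norm1 k:ℝ) / 2 := by
              rw [hθeq, le_div_iff₀ (by positivity)]
              nlinarith [hμ2]
            have hθ2 : (1 / ((n:ℝ) + 1 + (v:ℝ))) * (norm1 k:ℝ) / 2 ≤ 1/2 := by
              rw [hθeq, div_le_iff₀ (by positivity)]
              nlinarith [hμ1]
            have hsinθ : Real.sin (1/4) ≤ Real.sin ((1 / ((n:ℝ) + 1 + (v:ℝ))) * (norm1 k:ℝ) / 2) :=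
              Real.sin_le_sin_of_le_of_le_pi_div_two (by linarith [hπ0]) (by linarith [hπ3]) hθ1
            have habsθ : 2 * Real.sin (1/4)
                ≤ 2 * |Real.sin ((1 / ((n:ℝ) + 1 + (v:ℝ))) * (norm1 k:ℝ) / 2)| := by
              have h6 := le_abs_self (Real.sin ((1 / ((n:ℝ) + 1 + (v:ℝ))) * (norm1 k:ℝ) / 2))
              linarith
            apply mul_le_mul'
            · apply ENNReal.ofReal_le_ofReal
              have := one_div_le_one_div_of_le hμpos hμ2
              exact this
            · rw [← ENNReal.ofReal_mul (by positivity), hZ]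
              apply ENNReal.ofReal_le_ofReal
              rw [← Real.mul_rpow (by positivity) (by positivity)]
              apply Real.rpow_le_rpow (by positivity) ?_ hp0.le
              have hAF : (0:ℝ) ≤ (Nat.descFactorial (norm1 k) (r - 1) : ℝ) * ‖fCoeff f k‖ := by
                positivity
              exact mul_le_mul_of_nonneg_left habsθ hAF
          calc ENNReal.ofReal cp *
                ENNReal.ofReal (((Nat.descFactorial (norm1 k) (r - 1) : ℝ) * ‖fCoeff f k‖) ^ p)
              = ∑ v ∈ Finset.Icc (norm1 k - n) (2 * norm1 k - n - 1),
                  ENNReal.ofReal (1/(2*(norm1 k:ℝ))) *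
                  (ENNReal.ofReal (((Nat.descFactorial (norm1 k) (r - 1) : ℝ) * ‖fCoeff f k‖) ^ p) *
                   ENNReal.ofReal ((2 * Real.sin (1/4)) ^ p)) := by
                rw [Finset.sum_const, hcard, nsmul_eq_mul]
                have e1 : cp * (((Nat.descFactorial (norm1 k) (r - 1) : ℝ) * ‖fCoeff f k‖) ^ p)
                    = (norm1 k:ℝ) * ((1/(2*(norm1 k:ℝ))) *
                      ((((Nat.descFactorial (norm1 k) (r - 1) : ℝ) * ‖fCoeff f k‖) ^ p) *
                        ((2 * Real.sin (1/4)) ^ p))) := by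
                  rw [hcp_def]
                  field_simp
                calc ENNReal.ofReal cp * ENNReal.ofReal (((Nat.descFactorial (norm1 k) (r - 1) : ℝ) * ‖fCoeff f k‖) ^ p)
                    = ENNReal.ofReal (cp * (((Nat.descFactorial (norm1 k) (r - 1) : ℝ) * ‖fCoeff f k‖) ^ p)) :=
                      (ENNReal.ofReal_mul hcp.le).symm
                  _ = ENNReal.ofReal ((norm1 k:ℝ) * ((1/(2*(norm1 k:ℝ))) *
                      ((((Nat.descFactorial (norm1 k) (r - 1) : ℝ) * ‖fCoeff f k‖) ^ p) *
                        ((2 * Real.sin (1/4)) ^ p)))) := by rw [e1]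
                  _ = ((norm1 k : ℕ) : ℝ≥0∞) * (ENNReal.ofReal (1/(2*(norm1 k:ℝ))) *
                      (ENNReal.ofReal (((Nat.descFactorial (norm1 k) (r - 1) : ℝ) * ‖fCoeff f k‖) ^ p) *
                       ENNReal.ofReal ((2 * Real.sin (1/4)) ^ p))) := by
                      rw [ENNReal.ofReal_mul (Nat.cast_nonneg _), ENNReal.ofReal_mul (by positivity),
                        ENNReal.ofReal_mul (by positivity), ENNReal.ofReal_natCast]
              _ ≤ ∑ v ∈ Finset.Icc (norm1 k - n) (2 * norm1 k - n - 1),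
                  ENNReal.ofReal (1 / ((n:ℝ) + 1 + (v:ℝ))) *
                  (if r - 1 ≤ norm1 k then
                  ENNReal.ofReal (((Nat.descFactorial (norm1 k) (r - 1) : ℝ) * ‖fCoeff f k‖ *
                    ‖1 - Complex.exp (Complex.I * ((1 / ((n:ℝ) + 1 + (v:ℝ)) : ℝ) : ℂ) * (diagSum k : ℂ))‖) ^ p)
                  else 0) := Finset.sum_le_sum hstep
              _ ≤ _ := ENNReal.sum_le_tsum _
      · rw [if_neg hk, mul_zero]
        exact bot_le
    have hupW : (∑' v : ℕ, ENNReal.ofReal (1 / ((n:ℝ) + 1 + (v:ℝ))) *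
            (∑' k : Fin d → ℤ, if r - 1 ≤ norm1 k then
              ENNReal.ofReal (((Nat.descFactorial (norm1 k) (r - 1) : ℝ) * ‖fCoeff f k‖ *
                ‖1 - Complex.exp (Complex.I * ((1 / ((n:ℝ) + 1 + (v:ℝ)) : ℝ) : ℂ) * (diagSum k : ℂ))‖) ^ p)
              else 0))
        ≤ ENNReal.ofReal (C ^ p * (ω x) ^ (p-1)) * ENNReal.ofReal (C₀ * ω (1/(n:ℝ))) := by
      calc _ ≤ ∑' v : ℕ, ENNReal.ofReal (C ^ p * (ω x) ^ (p-1)) *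
            ENNReal.ofReal (ω (1 / ((n:ℝ) + 1 + (v:ℝ))) / ((n:ℝ) + 1 + (v:ℝ))) := by
            apply ENNReal.tsum_le_tsum
            intro v
            have hμpos : (0:ℝ) < (n:ℝ) + 1 + (v:ℝ) := by positivity
            have hvnn : (0:ℝ) ≤ (v:ℝ) := Nat.cast_nonneg v
            have hinv_le : 1/((n:ℝ)+1+(v:ℝ)) ≤ 1/(n:ℝ) :=
              one_div_le_one_div_of_le hnpos (by linarith)
            have hinv_pos : (0:ℝ) < 1/((n:ℝ)+1+(v:ℝ)) := by positivity
            have hinv_le1 : 1/((n:ℝ)+1+(v:ℝ)) ≤ 1 := le_trans hinv_le hn1le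
            have hinv_lex : 1/((n:ℝ)+1+(v:ℝ)) ≤ x := le_trans hinv_le hxn
            have hμδ : 1/((n:ℝ)+1+(v:ℝ)) < δ := lt_of_le_of_lt hinv_lex hxδ
            have hD_v := hDsum (1/((n:ℝ)+1+(v:ℝ))) hinv_pos hμδ hinv_le1
            have hω1μ : 0 < ω (1/((n:ℝ)+1+(v:ℝ))) := hωpos _ ⟨hinv_pos, hinv_le1⟩
            calc ENNReal.ofReal (1 / ((n:ℝ) + 1 + (v:ℝ))) *
                (∑' k : Fin d → ℤ, if r - 1 ≤ norm1 k then
                  ENNReal.ofReal (((Nat.descFactorial (norm1 k) (r - 1) : ℝ) * ‖fCoeff f k‖ *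
                    ‖1 - Complex.exp (Complex.I * ((1 / ((n:ℝ) + 1 + (v:ℝ)) : ℝ) : ℂ) * (diagSum k : ℂ))‖) ^ p)
                  else 0)
                ≤ ENNReal.ofReal (1 / ((n:ℝ) + 1 + (v:ℝ))) *
                  ENNReal.ofReal ((C * ω (1/((n:ℝ)+1+(v:ℝ)))) ^ p) := mul_le_mul_right hD_v _
              _ ≤ ENNReal.ofReal (C ^ p * (ω x) ^ (p-1)) *
                  ENNReal.ofReal (ω (1 / ((n:ℝ) + 1 + (v:ℝ))) / ((n:ℝ) + 1 + (v:ℝ))) := by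
                  rw [← ENNReal.ofReal_mul (by positivity),
                    ← ENNReal.ofReal_mul (mul_nonneg hCp hωxp1)]
                  apply ENNReal.ofReal_le_ofReal
                  have hsplitp : (C * ω (1/((n:ℝ)+1+(v:ℝ)))) ^ p
                      = C ^ p * (ω (1/((n:ℝ)+1+(v:ℝ))) ^ (p-1) * ω (1/((n:ℝ)+1+(v:ℝ)))) := by
                    rw [Real.mul_rpow hC.le hω1μ.le]
                    congr 1
                    have he : (p-1) + 1 = p := by ring
                    nth_rewrite 1 [← he]
                    rw [Real.rpow_add hω1μ, Real.rpow_one]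
                  have hmono : ω (1/((n:ℝ)+1+(v:ℝ))) ^ (p-1) ≤ (ω x) ^ (p-1) :=
                    Real.rpow_le_rpow hω1μ.le
                      (hωmono _ _ hinv_pos.le hinv_lex hx1.le) (by linarith)
                  calc 1 / ((n:ℝ) + 1 + (v:ℝ)) * (C * ω (1/((n:ℝ)+1+(v:ℝ)))) ^ p
                      = C ^ p * ω (1/((n:ℝ)+1+(v:ℝ))) ^ (p-1) *
                        (ω (1 / ((n:ℝ) + 1 + (v:ℝ))) / ((n:ℝ) + 1 + (v:ℝ))) := by
                        rw [hsplitp]; ring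
                    _ ≤ C ^ p * (ω x) ^ (p-1) *
                        (ω (1 / ((n:ℝ) + 1 + (v:ℝ))) / ((n:ℝ) + 1 + (v:ℝ))) := by
                        apply mul_le_mul_of_nonneg_right
                          (mul_le_mul_of_nonneg_left hmono hCp)
                        positivity
        _ = ENNReal.ofReal (C ^ p * (ω x) ^ (p-1)) *
            ∑' v : ℕ, ENNReal.ofReal (ω (1 / ((n:ℝ) + 1 + (v:ℝ))) / ((n:ℝ) + 1 + (v:ℝ))) :=
            ENNReal.tsum_mul_left
        _ ≤ _ := mul_le_mul_right (hBC n hNn) _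
    have hQ : ENNReal.ofReal (C₀ * ω (1/(n:ℝ))) ≤ ENNReal.ofReal (C₀ * ω x) := by
      apply ENNReal.ofReal_le_ofReal
      exact mul_le_mul_of_nonneg_left (hωmono _ _ (by positivity) hxn hx1.le) hC₀.le
    have hchain := le_trans hlow (le_trans hupW (mul_le_mul_right hQ _))
    have hne : ENNReal.ofReal cp ≠ 0 := (ENNReal.ofReal_pos.mpr hcp).ne'
    calc (∑' k : Fin d → ℤ, if n < norm1 k then
          ENNReal.ofReal (((Nat.descFactorial (norm1 k) (r - 1) : ℝ) * ‖fCoeff f k‖) ^ p) else 0)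
        = (ENNReal.ofReal cp)⁻¹ * (ENNReal.ofReal cp * (∑' k : Fin d → ℤ, if n < norm1 k then
          ENNReal.ofReal (((Nat.descFactorial (norm1 k) (r - 1) : ℝ) * ‖fCoeff f k‖) ^ p) else 0)) := by
          rw [← mul_assoc, ENNReal.inv_mul_cancel hne ENNReal.ofReal_ne_top, one_mul]
      _ ≤ (ENNReal.ofReal cp)⁻¹ * (ENNReal.ofReal (C ^ p * (ω x) ^ (p-1)) * ENNReal.ofReal (C₀ * ω x)) :=
          mul_le_mul_right hchain _
      _ = ENNReal.ofReal (C ^ p * (ω x) ^ (p-1) * (C₀ * ω x)) * (ENNReal.ofReal cp)⁻¹ := by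
          rw [← ENNReal.ofReal_mul (mul_nonneg hCp hωxp1)]
          ring
      _ = ENNReal.ofReal (C ^ p * (ω x) ^ (p-1) * (C₀ * ω x) / cp) := by
          rw [ENNReal.ofReal_div_of_pos hcp, div_eq_mul_inv]
  -- assemble everything
  have hB1nn : (0:ℝ) ≤ (x ^ (r-1) * (π / (2 * (r.factorial:ℝ)))) * (C * ω x) :=
    mul_nonneg (by positivity) (mul_nonneg hC.le hωx.le)
  have hB2nn : (0:ℝ) ≤ (x ^ (r-1) * (r:ℝ) ^ (r-1)) * ((C * ω x) * E) :=
    mul_nonneg (by positivity) (mul_nonneg (mul_nonneg hC.le hωx.le) hE0)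
  have hB1eq : (ENNReal.ofReal ((x ^ (r-1) * (π / (2 * (r.factorial:ℝ)))) * (C * ω x))) ^ p
      = ENNReal.ofReal ((x ^ (r-1) * (π / (2 * (r.factorial:ℝ)))) ^ p) *
        ENNReal.ofReal ((C * ω x) ^ p) := by
    rw [ENNReal.ofReal_rpow_of_nonneg hB1nn hp0.le,
      Real.mul_rpow (by positivity) (mul_nonneg hC.le hωx.le),
      ENNReal.ofReal_mul (by positivity)]
  have hT1 : (∑' k : Fin d → ℤ, if r ≤ norm1 k ∧ norm1 k ≤ n then
        ENNReal.ofReal (((∑ j ∈ Finset.Icc r (norm1 k),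
          (Nat.choose (norm1 k) j : ℝ) * x ^ j * ρ ^ (norm1 k - j)) * ‖fCoeff f k‖) ^ p)
        else 0)
      ≤ (ENNReal.ofReal ((x ^ (r-1) * (π / (2 * (r.factorial:ℝ)))) * (C * ω x))) ^ p :=
    le_trans hsmall (le_of_eq hB1eq.symm)
  have hlarge : (∑' k : Fin d → ℤ, if n < norm1 k then
        ENNReal.ofReal (((∑ j ∈ Finset.Icc r (norm1 k),
          (Nat.choose (norm1 k) j : ℝ) * x ^ j * ρ ^ (norm1 k - j)) * ‖fCoeff f k‖) ^ p)
        else 0)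
      ≤ ENNReal.ofReal ((x ^ (r-1) * (r:ℝ) ^ (r-1)) ^ p) *
        ENNReal.ofReal (C ^ p * (ω x) ^ (p-1) * (C₀ * ω x) / cp) := by
    calc _ ≤ ∑' k : Fin d → ℤ, ENNReal.ofReal ((x ^ (r-1) * (r:ℝ) ^ (r-1)) ^ p) *
        (if n < norm1 k then
          ENNReal.ofReal (((Nat.descFactorial (norm1 k) (r - 1) : ℝ) * ‖fCoeff f k‖) ^ p)
          else 0) := ENNReal.tsum_le_tsum hlarge_pt
      _ = ENNReal.ofReal ((x ^ (r-1) * (r:ℝ) ^ (r-1)) ^ p) *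
          ∑' k : Fin d → ℤ, (if n < norm1 k then
          ENNReal.ofReal (((Nat.descFactorial (norm1 k) (r - 1) : ℝ) * ‖fCoeff f k‖) ^ p)
          else 0) := ENNReal.tsum_mul_left
      _ ≤ _ := mul_le_mul_right htail _
  have hB2eq : ENNReal.ofReal ((x ^ (r-1) * (r:ℝ) ^ (r-1)) ^ p) *
        ENNReal.ofReal (C ^ p * (ω x) ^ (p-1) * (C₀ * ω x) / cp)
      = (ENNReal.ofReal ((x ^ (r-1) * (r:ℝ) ^ (r-1)) * ((C * ω x) * E))) ^ p := by
    rw [ENNReal.ofReal_rpow_of_nonneg hB2nn hp0.le]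
    rw [← ENNReal.ofReal_mul (by positivity)]
    congr 1
    rw [Real.mul_rpow (by positivity) (mul_nonneg (mul_nonneg hC.le hωx.le) hE0),
      Real.mul_rpow (mul_nonneg hC.le hωx.le) hE0,
      Real.mul_rpow hC.le hωx.le, hEp]
    have e4 : (ω x) ^ p = (ω x) ^ (p-1) * ω x := by
      have he : (p-1) + 1 = p := by ring
      nth_rewrite 1 [← he]
      rw [Real.rpow_add hωx, Real.rpow_one]
    rw [e4]
    ring
  have hT2 : (∑' k : Fin d → ℤ, if n < norm1 k then
        ENNReal.ofReal (((∑ j ∈ Finset.Icc r (norm1 k),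
          (Nat.choose (norm1 k) j : ℝ) * x ^ j * ρ ^ (norm1 k - j)) * ‖fCoeff f k‖) ^ p)
        else 0)
      ≤ (ENNReal.ofReal ((x ^ (r-1) * (r:ℝ) ^ (r-1)) * ((C * ω x) * E))) ^ p :=
    le_trans hlarge (le_of_eq hB2eq)
  have hsplit : (∑' k : Fin d → ℤ, if r ≤ norm1 k then
        ENNReal.ofReal (((∑ j ∈ Finset.Icc r (norm1 k),
          (Nat.choose (norm1 k) j : ℝ) * x ^ j * ρ ^ (norm1 k - j)) * ‖fCoeff f k‖) ^ p)
        else 0)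
      = (∑' k : Fin d → ℤ, if r ≤ norm1 k ∧ norm1 k ≤ n then
        ENNReal.ofReal (((∑ j ∈ Finset.Icc r (norm1 k),
          (Nat.choose (norm1 k) j : ℝ) * x ^ j * ρ ^ (norm1 k - j)) * ‖fCoeff f k‖) ^ p)
        else 0)
      + (∑' k : Fin d → ℤ, if n < norm1 k then
        ENNReal.ofReal (((∑ j ∈ Finset.Icc r (norm1 k),
          (Nat.choose (norm1 k) j : ℝ) * x ^ j * ρ ^ (norm1 k - j)) * ‖fCoeff f k‖) ^ p)
        else 0) := by
    rw [← ENNReal.tsum_add]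
    apply tsum_congr
    intro k
    rcases le_or_gt (norm1 k) n with h2 | h2
    · have h3 : ¬ n < norm1 k := not_lt.mpr h2
      by_cases h1 : r ≤ norm1 k
      · rw [if_pos h1, if_pos ⟨h1, h2⟩, if_neg h3, add_zero]
      · rw [if_neg h1, if_neg (by omega : ¬ (r ≤ norm1 k ∧ norm1 k ≤ n)), if_neg h3, add_zero]
    · have h1 : r ≤ norm1 k := le_trans hrn h2.le
      rw [if_pos h1, if_neg (by omega : ¬ (r ≤ norm1 k ∧ norm1 k ≤ n)), if_pos h2, zero_add]
  calc (∑' k : Fin d → ℤ, if r ≤ norm1 k then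
        ENNReal.ofReal (((∑ j ∈ Finset.Icc r (norm1 k),
          (Nat.choose (norm1 k) j : ℝ) * x ^ j * ρ ^ (norm1 k - j)) * ‖fCoeff f k‖) ^ p)
        else 0) ^ (1/p)
      = ((∑' k : Fin d → ℤ, if r ≤ norm1 k ∧ norm1 k ≤ n then
        ENNReal.ofReal (((∑ j ∈ Finset.Icc r (norm1 k),
          (Nat.choose (norm1 k) j : ℝ) * x ^ j * ρ ^ (norm1 k - j)) * ‖fCoeff f k‖) ^ p)
        else 0)
      + (∑' k : Fin d → ℤ, if n < norm1 k then
        ENNReal.ofReal (((∑ j ∈ Finset.Icc r (norm1 k),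
          (Nat.choose (norm1 k) j : ℝ) * x ^ j * ρ ^ (norm1 k - j)) * ‖fCoeff f k‖) ^ p)
        else 0)) ^ (1/p) := by rw [hsplit]
    _ ≤ ((ENNReal.ofReal ((x ^ (r-1) * (π / (2 * (r.factorial:ℝ)))) * (C * ω x))) ^ p
        + (ENNReal.ofReal ((x ^ (r-1) * (r:ℝ) ^ (r-1)) * ((C * ω x) * E))) ^ p) ^ (1/p) :=
        ENNReal.rpow_le_rpow (add_le_add hT1 hT2) (by positivity)
    _ ≤ ((ENNReal.ofReal ((x ^ (r-1) * (π / (2 * (r.factorial:ℝ)))) * (C * ω x))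
        + ENNReal.ofReal ((x ^ (r-1) * (r:ℝ) ^ (r-1)) * ((C * ω x) * E))) ^ p) ^ (1/p) :=
        ENNReal.rpow_le_rpow (ENNReal.add_rpow_le_rpow_add _ _ hp) (by positivity)
    _ = ENNReal.ofReal ((x ^ (r-1) * (π / (2 * (r.factorial:ℝ)))) * (C * ω x))
        + ENNReal.ofReal ((x ^ (r-1) * (r:ℝ) ^ (r-1)) * ((C * ω x) * E)) := by
        rw [← ENNReal.rpow_mul, mul_one_div, div_self hp0', ENNReal.rpow_one]
    _ = ENNReal.ofReal ((x ^ (r-1) * (π / (2 * (r.factorial:ℝ)))) * (C * ω x)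
        + (x ^ (r-1) * (r:ℝ) ^ (r-1)) * ((C * ω x) * E)) := (ENNReal.ofReal_add hB1nn hB2nn).symm
    _ = ENNReal.ofReal (C * (π / (2 * (r.factorial:ℝ)) + (r:ℝ) ^ (r - 1) * E) * x ^ (r - 1) * ω x) := by
        congr 1
        ring
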